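/- Every matrix h(A,z,c) ∈ 𝔥^{II} is skew-symmetric with respect to the bilinear form g = 2(b^1·b^6 + b^2·b^7 + b^3·b^5) − b^4·b^4 on ℝ^7; that is, g(h(A,z,c) X, Y) + g(X, h(A,z,c) Y) = 0 for all X, Y ∈ ℝ^7. -/

import Mathlib

open Matrix Real

noncomputable section

/-- σ(z) : 2×3 matrix. -/
def sigM (z : Fin 4 → ℝ) : Matrix (Fin 2) (Fin 3) ℝ :=
  !![z 1, Real.sqrt 2 * z 2, z 3;
     z 0, Real.sqrt 2 * z 1, z 2]

/-- ρ(A) : 3×3 matrix. -/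
def rhoM (A : Matrix (Fin 2) (Fin 2) ℝ) : Matrix (Fin 3) (Fin 3) ℝ :=
  !![A 0 0 - A 1 1, -(Real.sqrt 2) * A 0 1, 0;
     -(Real.sqrt 2) * A 1 0, 0, -(Real.sqrt 2) * A 0 1;
     0, -(Real.sqrt 2) * A 1 0, -(A 0 0) + A 1 1]

/-- h(A,z,c) : the 7×7 block matrix [[A, σ(z), U(c)],[0, ρ(A), σ(z)^*],[0,0,−Aᵀ]]. -/
def hM (A : Matrix (Fin 2) (Fin 2) ℝ) (z : Fin 4 → ℝ) (c : ℝ) : Matrix (Fin 7) (Fin 7) ℝ :=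
  !![A 0 0, A 0 1, z 1, Real.sqrt 2 * z 2, z 3, 0, -c;
     A 1 0, A 1 1, z 0, Real.sqrt 2 * z 1, z 2, c, 0;
     0, 0, A 0 0 - A 1 1, -(Real.sqrt 2) * A 0 1, 0, -(z 3), -(z 2);
     0, 0, -(Real.sqrt 2) * A 1 0, 0, -(Real.sqrt 2) * A 0 1, Real.sqrt 2 * z 2, Real.sqrt 2 * z 1;
     0, 0, 0, -(Real.sqrt 2) * A 1 0, -(A 0 0) + A 1 1, -(z 1), -(z 0);
     0, 0, 0, 0, 0, -(A 0 0), -(A 1 0);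
     0, 0, 0, 0, 0, -(A 0 1), -(A 1 1)]

/-- Gram matrix of g with g(b1,b6)=g(b2,b7)=g(b3,b5)=1, g(b4,b4)=−1. -/
def G1 : Matrix (Fin 7) (Fin 7) ℝ :=
  !![0,0,0,0,0,1,0;
     0,0,0,0,0,0,1;
     0,0,0,0,1,0,0;
     0,0,0,-1,0,0,0;
     0,0,1,0,0,0,0;
     1,0,0,0,0,0,0;
     0,1,0,0,0,0,0]

/-- Gram matrix of ⟨x,y⟩ = 2(x1y6+x6y1+x2y7+x7y2+x3y5+x5y3) − x4y4. -/
def G2 : Matrix (Fin 7) (Fin 7) ℝ :=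
  !![0,0,0,0,0,2,0;
     0,0,0,0,0,0,2;
     0,0,0,0,2,0,0;
     0,0,0,-1,0,0,0;
     0,0,2,0,0,0,0;
     2,0,0,0,0,0,0;
     0,2,0,0,0,0,0]

/-- The 14-parameter family of matrices spanning 𝔤₂*. -/
def Mg (s : Fin 14 → ℝ) : Matrix (Fin 7) (Fin 7) ℝ :=
  !![s 0 + s 3, -(s 9), s 8, Real.sqrt 2 * s 5, -(s 11), 0, -(s 10);
     -(s 7), s 0, s 1, Real.sqrt 2 * s 8, s 5, s 10, 0;
     s 6, s 2, s 3, Real.sqrt 2 * s 9, 0, s 11, -(s 5);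
     Real.sqrt 2 * s 4, Real.sqrt 2 * s 6, Real.sqrt 2 * s 7, 0, Real.sqrt 2 * s 9, Real.sqrt 2 * s 5, Real.sqrt 2 * s 8;
     -(s 13), s 4, 0, Real.sqrt 2 * s 7, -(s 3), -(s 8), -(s 1);
     0, s 12, s 13, Real.sqrt 2 * s 4, -(s 6), -(s 0) - s 3, s 7;
     -(s 12), 0, -(s 4), Real.sqrt 2 * s 6, -(s 2), s 9, -(s 0)]

/-- standard basis vector b_i of ℝ^7. -/
def bb (i : Fin 7) : Fin 7 → ℝ := Pi.single i 1

/-- determinant of the (i,j,k)-coordinates of X,Y,Z : the value b^i∧b^j∧b^k (X,Y,Z). -/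
def d3 (X Y Z : Fin 7 → ℝ) (i j k : Fin 7) : ℝ :=
  Matrix.det !![X i, X j, X k; Y i, Y j, Y k; Z i, Z j, Z k]

/-- The generic 3-form ω = √2(−b^{157}+b^{236}) − b^4∧(b^{16}−b^{27}−b^{35}), as a
function of three vectors. -/
def om (X Y Z : Fin 7 → ℝ) : ℝ :=
  Real.sqrt 2 * (-(d3 X Y Z 0 4 6) + d3 X Y Z 1 2 5)
    - (d3 X Y Z 3 0 5 - d3 X Y Z 3 1 6 - d3 X Y Z 3 2 4)

/-- the value of α ∧ β ∧ γ (α,β 2-forms, γ a 3-form) on the standard basis of ℝ^7. -/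
def wedge223 (α β : (Fin 7 → ℝ) → (Fin 7 → ℝ) → ℝ)
    (γ : (Fin 7 → ℝ) → (Fin 7 → ℝ) → (Fin 7 → ℝ) → ℝ) : ℝ :=
  (1 / 24 : ℝ) * ∑ p : Equiv.Perm (Fin 7),
    ((Equiv.Perm.sign p : ℤ) : ℝ) * α (bb (p 0)) (bb (p 1)) * β (bb (p 2)) (bb (p 3))
      * γ (bb (p 4)) (bb (p 5)) (bb (p 6))

/-- the matrix of the third symmetric power of the standard representation of 𝔤𝔩(2,ℝ),
in the monomial basis (x³, x²y, xy², y³). -/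
def sym3 (A : Matrix (Fin 2) (Fin 2) ℝ) : Matrix (Fin 4) (Fin 4) ℝ :=
  !![3 * A 0 0, A 0 1, 0, 0;
     3 * A 1 0, 2 * A 0 0 + A 1 1, 2 * A 0 1, 0;
     0, 2 * A 1 0, A 0 0 + 2 * A 1 1, 3 * A 0 1;
     0, 0, A 1 0, 3 * A 1 1]

/-- partial derivative in the i-th coordinate direction. -/
def pd (i : Fin 7) (F : (Fin 7 → ℝ) → ℝ) (x : Fin 7 → ℝ) : ℝ :=
  fderiv ℝ F x (Pi.single i 1)

/-- every h(A,z,c) is skew-symmetric with respect to g. -/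
theorem stmt_4 (A : Matrix (Fin 2) (Fin 2) ℝ) (z : Fin 4 → ℝ) (c : ℝ)
    (X Y : Fin 7 → ℝ) :
    ((hM A z c).mulVec X) ⬝ᵥ G1.mulVec Y + X ⬝ᵥ G1.mulVec ((hM A z c).mulVec Y) = 0 := by
  set_option maxHeartbeats 1600000 in
  simp only [hM, G1, Matrix.cons_mulVec, Matrix.cons_dotProduct, Matrix.dotProduct_cons,
    Matrix.empty_mulVec, Matrix.dotProduct_of_isEmpty, Matrix.head_cons, Matrix.tail_cons,
    zero_dotProduct, dotProduct_zero]
  ring
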